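/- Uniqueness from samples in B^p_{c,T}: let f ∈ B^p_{c,T} with c ∈ ℝ, T > 0 and p ∈ [1,∞). If f(e^{kπ/T}, 0) = 0 for every k ∈ ℤ, then f is identically zero on H. -/

import Mathlib

open MeasureTheory Filter Complex ENNReal
open scoped Topology

noncomputable section

/-- The right half-plane `H = {(r,θ) : r > 0}`. -/
def polarHalfPlane : Set (ℝ × ℝ) := {p : ℝ × ℝ | 0 < p.1}

/-- `f` has polar derivative `L` at `p`, the limit being taken within `D`. -/
def HasPolarDerivAt (f : ℝ × ℝ → ℂ) (D : Set (ℝ × ℝ)) (p : ℝ × ℝ) (L : ℂ) : Prop :=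
  Tendsto (fun q : ℝ × ℝ =>
      (f q - f p) /
        ((q.1 : ℂ) * Complex.exp (Complex.I * (q.2 : ℂ)) -
         (p.1 : ℂ) * Complex.exp (Complex.I * (p.2 : ℂ))))
    (nhdsWithin p (D \ {p})) (nhds L)

/-- `f` is polar-analytic on `D`. -/
def PolarAnalyticOn (f : ℝ × ℝ → ℂ) (D : Set (ℝ × ℝ)) : Prop :=
  ∀ p ∈ D, ∃ L : ℂ, HasPolarDerivAt f D p L

/-- The polar Mellin derivative `Θ_c f = r ∂f/∂r + c f`. -/
def mellinPolarDeriv (c : ℝ) (f : ℝ × ℝ → ℂ) : ℝ × ℝ → ℂ :=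
  fun p => (p.1 : ℂ) * deriv (fun r : ℝ => f (r, p.2)) p.1 + (c : ℂ) * f p

/-- The `X_c^p` norm. -/
def XNorm (c : ℝ) (p : ℝ≥0∞) (φ : ℝ → ℂ) : ℝ≥0∞ :=
  if p = ⊤ then ⨆ r : {r : ℝ // 0 < r}, ENNReal.ofReal ((r : ℝ) ^ c * ‖φ r‖)
  else (∫⁻ r in Set.Ioi (0 : ℝ),
          ENNReal.ofReal ((r ^ c * ‖φ r‖) ^ p.toReal / r)) ^ (1 / p.toReal)

/-- Membership in the Mellin–Bernstein space `B^p_{c,T}`. -/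
def MemMellinBernstein (p : ℝ≥0∞) (c T : ℝ) (f : ℝ × ℝ → ℂ) : Prop :=
  PolarAnalyticOn f polarHalfPlane ∧
  XNorm c p (fun r => f (r, 0)) < ⊤ ∧
  ∃ C : ℝ, 0 < C ∧ ∀ r θ : ℝ, 0 < r → r ^ c * ‖f (r, θ)‖ ≤ C * Real.exp (T * |θ|)

/-- The polar disk `E((r₀,θ₀),ρ)`. -/
def polarDisk (p : ℝ × ℝ) (ρ : ℝ) : Set (ℝ × ℝ) :=
  {q : ℝ × ℝ | 0 < q.1 ∧
    ‖((Real.log (q.1 / p.1) : ℂ) + Complex.I * ((q.2 - p.2 : ℝ) : ℂ))‖ < ρ}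

/-- The polar contour integral along the positively oriented boundary of
`[a,b] × [α,β]`:  `∮ g(r,θ) e^{iθ} (dr + i r dθ)`. -/
def rectPolarIntegral (a b α β : ℝ) (g : ℝ × ℝ → ℂ) : ℂ :=
  (∫ r in a..b, g (r, α) * Complex.exp (Complex.I * (α : ℂ))) +
  (∫ θ in α..β, g (b, θ) * Complex.I * (b : ℂ) * Complex.exp (Complex.I * (θ : ℂ))) -
  (∫ r in a..b, g (r, β) * Complex.exp (Complex.I * (β : ℂ))) -
  (∫ θ in α..β, g (a, θ) * Complex.I * (a : ℂ) * Complex.exp (Complex.I * (θ : ℂ)))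

/-- `(r₀,θ₀)` is a logarithmic pole of order `k` of `f`, witnessed by the
neighborhood `U₀` and the polar-analytic function `g`. -/
def IsLogPole (f : ℝ × ℝ → ℂ) (p : ℝ × ℝ) (k : ℕ) (U₀ : Set (ℝ × ℝ))
    (g : ℝ × ℝ → ℂ) : Prop :=
  IsOpen U₀ ∧ p ∈ U₀ ∧ U₀ ⊆ polarHalfPlane ∧ 1 ≤ k ∧
  PolarAnalyticOn f (U₀ \ {p}) ∧ PolarAnalyticOn g U₀ ∧ g p ≠ 0 ∧
  ∀ q ∈ U₀ \ {p},
    f q = g q / ((Real.log (q.1 / p.1) : ℂ) + Complex.I * ((q.2 - p.2 : ℝ) : ℂ)) ^ k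

/-- The `c`-residue of a logarithmic pole of order `k` with witness `g`. -/
def cResidue (c : ℝ) (p : ℝ × ℝ) (k : ℕ) (g : ℝ × ℝ → ℂ) : ℂ :=
  ((p.1 ^ c : ℝ) : ℂ) * Complex.exp (Complex.I * (c : ℂ) * (p.2 : ℂ)) *
    ((mellinPolarDeriv c)^[k - 1] g p) / ((k - 1).factorial : ℂ)

/-- The central Mellin difference `δ_{c,t} f`. -/
def centralMellinDiff (c t : ℝ) (f : ℝ × ℝ → ℂ) : ℝ × ℝ → ℂ :=
  fun q => ((t ^ c : ℝ) : ℂ) * f (t * q.1, q.2) - ((t ^ (-c) : ℝ) : ℂ) * f (t⁻¹ * q.1, q.2)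


section AuxST16
open Topology

lemma exp_ne_exp_of_close {w z : ℂ} (hne : w ≠ z) (h : ‖w - z‖ < 1) :
    Complex.exp w ≠ Complex.exp z := by
  intro he
  obtain ⟨n, hn⟩ := Complex.exp_eq_exp_iff_exists_int.mp he
  have hn0 : n ≠ 0 := by
    rintro rfl; simp at hn; exact hne (by simp [hn])
  have hnorm : ‖w - z‖ = |(n:ℝ)| * (2 * Real.pi) := by
    rw [hn]
    rw [add_sub_cancel_left]
    simp [norm_mul, Complex.norm_I, Complex.norm_intCast, Complex.norm_real,
      Real.norm_eq_abs, _root_.abs_of_nonneg Real.pi_nonneg]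
  have h1 : (1:ℝ) ≤ |(n:ℝ)| := by
    rw [← Int.cast_abs]; exact_mod_cast Int.one_le_abs hn0
  nlinarith [Real.pi_gt_three, hnorm ▸ h]

lemma norm_sin_sq_eq (w : ℂ) :
    ‖Complex.sin w‖ ^ 2 = Real.sin w.re ^ 2 + Real.sinh w.im ^ 2 := by
  have hw : w = (w.re : ℂ) + (w.im : ℂ) * I := (Complex.re_add_im w).symm
  nth_rewrite 1 [hw]
  rw [Complex.sin_add, Complex.sin_mul_I, Complex.cos_mul_I]
  have h2 : (Complex.sin w.re * Complex.cosh w.im + Complex.cos w.re * (Complex.sinh w.im * I))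
      = ((Real.sin w.re * Real.cosh w.im : ℝ) : ℂ) + ((Real.cos w.re * Real.sinh w.im : ℝ) : ℂ) * I := by
    push_cast
    ring
  rw [h2]
  have h3 : ‖((Real.sin w.re * Real.cosh w.im : ℝ) : ℂ) + ((Real.cos w.re * Real.sinh w.im : ℝ) : ℂ) * I‖ ^ 2
      = (Real.sin w.re * Real.cosh w.im)^2 + (Real.cos w.re * Real.sinh w.im)^2 := by
    rw [Complex.sq_norm, Complex.normSq_add_mul_I]
  rw [h3]
  nlinarith [Real.cosh_sq w.im, Real.sin_sq_add_cos_sq w.re]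

-- 1 ≤ ‖sin w‖ if w is π/2-far from πℤ
lemma one_le_norm_sin {w : ℂ} (h : ∀ k : ℤ, Real.pi / 2 ≤ ‖w - (k : ℂ) * Real.pi‖) :
    1 ≤ ‖Complex.sin w‖ := by
  set k : ℤ := round (w.re / Real.pi) with hk
  set x : ℝ := w.re - k * Real.pi with hx
  have hpi := Real.pi_pos
  have hxle : |x| ≤ Real.pi / 2 := by
    have h0 := abs_sub_round (w.re / Real.pi)
    have hxe : x = (w.re / Real.pi - k) * Real.pi := by
      rw [hx]; field_simp
    rw [hxe, abs_mul, _root_.abs_of_pos hpi]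
    calc |w.re / Real.pi - ↑k| * Real.pi ≤ 1/2 * Real.pi :=
          mul_le_mul_of_nonneg_right h0 Real.pi_nonneg
      _ = Real.pi / 2 := by ring
  have hsq : (Real.pi/2)^2 ≤ x^2 + w.im^2 := by
    have h1 := h k
    have h2 : ‖w - (k : ℂ) * Real.pi‖^2 = x^2 + w.im^2 := by
      rw [Complex.sq_norm, Complex.normSq_apply]
      simp [hx]
      ring
    have h3 : (Real.pi/2)^2 ≤ ‖w - (k : ℂ) * Real.pi‖^2 :=
      pow_le_pow_left₀ (by positivity) h1 2
    exact le_of_le_of_eq h3 h2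
  -- sin w.re ^2 = sin x ^2
  have hsinx : Real.sin w.re ^ 2 = Real.sin x ^ 2 := by
    have : w.re = x + k * Real.pi := by ring
    rw [this, Real.sin_add_int_mul_pi]
    rcases Int.even_or_odd k with he | ho
    · rw [he.neg_one_zpow]; ring
    · rw [Odd.neg_one_zpow ho]; ring
  -- Jordan: sin|x| ≥ 2/π |x|
  have hj : 2 / Real.pi * |x| ≤ Real.sin |x| :=
    Real.mul_le_sin (abs_nonneg x) hxle
  have hsin2 : (2/Real.pi)^2 * x^2 ≤ Real.sin x ^2 := by
    have : Real.sin |x| ^ 2 = Real.sin x ^ 2 := by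
      rcases abs_cases x with ⟨h1, _⟩ | ⟨h1, _⟩ <;> rw [h1] <;> simp [Real.sin_neg] <;> ring
    have hja : (0:ℝ) ≤ 2/Real.pi * |x| := by positivity
    have h4 := mul_le_mul hj hj hja (hja.trans hj)
    have h5 : (2/Real.pi)^2 * x^2 = (2/Real.pi*|x|)*(2/Real.pi*|x|) := by
      rw [← _root_.sq_abs x]; ring
    rw [h5, ← this, sq]
    exact h4
  have hsinh2 : w.im^2 ≤ Real.sinh w.im ^ 2 := by
    have h1 : |w.im| ≤ Real.sinh |w.im| := Real.self_le_sinh_iff.mpr (abs_nonneg _)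
    have h2 : |Real.sinh w.im| = Real.sinh |w.im| := Real.abs_sinh w.im
    nlinarith [_root_.sq_abs w.im, _root_.sq_abs (Real.sinh w.im), abs_nonneg w.im]
  have key : 1 ≤ ‖Complex.sin w‖^2 := by
    rw [norm_sin_sq_eq, hsinx]
    have hfrac : (2/Real.pi)^2 ≤ 1 := by
      rw [div_pow]
      rw [div_le_one (by positivity)]
      nlinarith [Real.pi_gt_three]
    have : (2/Real.pi)^2 * (Real.pi/2)^2 ≤ (2/Real.pi)^2 * (x^2 + w.im^2) := by
      apply mul_le_mul_of_nonneg_left hsq (by positivity)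
    have heq : (2/Real.pi)^2 * (Real.pi/2)^2 = 1 := by
      field_simp
    nlinarith [sq_nonneg w.im, sq_nonneg (Real.sin x), sq_nonneg x]
  nlinarith [norm_nonneg (Complex.sin w)]

lemma sinh_le_norm_sin (w : ℂ) : Real.sinh |w.im| ≤ ‖Complex.sin w‖ := by
  have h := norm_sin_sq_eq w
  have h2 : Real.sinh |w.im| ^2 = Real.sinh w.im ^2 := by
    rw [← Real.abs_sinh]; exact _root_.sq_abs _
  nlinarith [norm_nonneg (Complex.sin w), sq_nonneg (Real.sin w.re),
    Real.sinh_nonneg_iff.mpr (abs_nonneg w.im), norm_sin_sq_eq w]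

lemma rexp_mul_cexp (w : ℂ) :
    ((Real.exp w.re : ℝ) : ℂ) * Complex.exp (Complex.I * (w.im : ℂ)) = Complex.exp w := by
  rw [Complex.ofReal_exp, ← Complex.exp_add]
  congr 1
  rw [mul_comm Complex.I]
  exact_mod_cast Complex.re_add_im w

lemma entire_of_polarAnalytic {f : ℝ × ℝ → ℂ} (hf : PolarAnalyticOn f polarHalfPlane) :
    Differentiable ℂ (fun z : ℂ => f (Real.exp z.re, z.im)) := by
  intro z
  set F : ℂ → ℂ := fun w => f (Real.exp w.re, w.im) with hF
  set p : ℝ × ℝ := (Real.exp z.re, z.im) with hp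
  obtain ⟨L, hL⟩ := hf p (by simp [polarHalfPlane, hp, Real.exp_pos])
  set ψ : ℂ → ℝ × ℝ := fun w => (Real.exp w.re, w.im) with hψ
  have hψc : Tendsto ψ (𝓝 z) (𝓝 p) := by
    apply ContinuousAt.tendsto
    exact (Real.continuous_exp.comp Complex.continuous_re).continuousAt.prodMk
      Complex.continuous_im.continuousAt
  have hψt : Tendsto ψ (𝓝[≠] z) (𝓝[polarHalfPlane \ {p}] p) := by
    rw [tendsto_nhdsWithin_iff]
    constructor
    · exact hψc.mono_left nhdsWithin_le_nhds
    · filter_upwards [self_mem_nhdsWithin] with w hw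
      refine ⟨Real.exp_pos _, ?_⟩
      simp only [Set.mem_singleton_iff]
      intro hwp
      apply hw
      have h1 : Real.exp w.re = Real.exp z.re := congrArg Prod.fst hwp
      have h2 : w.im = z.im := congrArg Prod.snd hwp
      exact Complex.ext (Real.exp_injective h1) h2
  have hA : Tendsto (fun w => (F w - F z) / (Complex.exp w - Complex.exp z))
      (𝓝[≠] z) (𝓝 L) := by
    have := hL.comp hψt
    apply this.congr
    intro w
    simp only [Function.comp_apply, hψ, hp, rexp_mul_cexp, hF]
  have hB : Tendsto (fun w => (Complex.exp w - Complex.exp z) / (w - z))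
      (𝓝[≠] z) (𝓝 (Complex.exp z)) := by
    have := hasDerivAt_iff_tendsto_slope.mp (Complex.hasDerivAt_exp z)
    apply this.congr
    intro w
    rw [slope_def_field]
  have hAB := hA.mul hB
  have key : HasDerivAt F (L * Complex.exp z) z := by
    rw [hasDerivAt_iff_tendsto_slope]
    apply Tendsto.congr' _ hAB
    have hball : ∀ᶠ w in 𝓝[≠] z, ‖w - z‖ < 1 := by
      apply eventually_nhdsWithin_of_eventually_nhds
      have h0 : Tendsto (fun w : ℂ => ‖w - z‖) (𝓝 z) (𝓝 0) := by
        have h1 := ((continuous_id.sub (continuous_const (y := z))).norm.tendsto z)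
        simpa using h1
      exact h0.eventually_lt_const one_pos
    filter_upwards [hball, self_mem_nhdsWithin] with w hw1 hw2
    have hwz : w ≠ z := hw2
    have hexp : Complex.exp w - Complex.exp z ≠ 0 :=
      sub_ne_zero.mpr (exp_ne_exp_of_close hwz hw1)
    have hsub : w - z ≠ 0 := sub_ne_zero.mpr hwz
    rw [slope_def_field]
    field_simp
  exact key.differentiableAt

end AuxST16


lemma sin_log_lower (T : ℝ) (hT : 0 < T) (k : ℕ) (r : ℝ)
    (h1 : Real.exp (((k:ℝ) * Real.pi + Real.pi / 2 - 1 / 2) / T) < r)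
    (h2 : r ≤ Real.exp (((k:ℝ) * Real.pi + Real.pi / 2 + 1 / 2) / T)) :
    1 / 2 ≤ |Real.sin (T * Real.log r)| := by
  have hrpos : 0 < r := lt_trans (Real.exp_pos _) h1
  have hlog1 : ((k:ℝ) * Real.pi + Real.pi / 2 - 1 / 2) / T < Real.log r := by
    rw [← Real.log_exp (((k:ℝ) * Real.pi + Real.pi / 2 - 1 / 2) / T)]
    exact Real.log_lt_log (Real.exp_pos _) h1
  have hlog2 : Real.log r ≤ ((k:ℝ) * Real.pi + Real.pi / 2 + 1 / 2) / T := by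
    rw [← Real.log_exp (((k:ℝ) * Real.pi + Real.pi / 2 + 1 / 2) / T)]
    exact Real.log_le_log hrpos h2
  set v : ℝ := T * Real.log r - (k : ℝ) * Real.pi - Real.pi / 2 with hvdef
  have hv : |v| ≤ 1 / 2 := by
    rw [abs_le]
    have hT1 : T * (((k:ℝ) * Real.pi + Real.pi / 2 - 1 / 2) / T)
        = (k:ℝ) * Real.pi + Real.pi / 2 - 1 / 2 := by field_simp
    have hT2 : T * (((k:ℝ) * Real.pi + Real.pi / 2 + 1 / 2) / T)
        = (k:ℝ) * Real.pi + Real.pi / 2 + 1 / 2 := by field_simp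
    constructor
    · have h8 := mul_le_mul_of_nonneg_left hlog1.le hT.le
      rw [hT1] at h8
      rw [hvdef]; linarith
    · have h8 := mul_le_mul_of_nonneg_left hlog2 hT.le
      rw [hT2] at h8
      rw [hvdef]; linarith
  have hsin : Real.sin (T * Real.log r) = (-1 : ℝ) ^ (k : ℤ) * Real.cos v := by
    have harg : T * Real.log r = (Real.pi / 2 + v) + (k : ℤ) * Real.pi := by
      rw [hvdef]; push_cast; ring
    rw [harg, Real.sin_add_int_mul_pi]
    congr 1
    rw [Real.sin_add, Real.sin_pi_div_two, Real.cos_pi_div_two]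
    ring
  have hcos : 1 / 2 ≤ Real.cos v := by
    have h3 := Real.one_sub_sq_div_two_le_cos (x := v)
    have h4 : v ^ 2 ≤ (1/2)^2 := by
      rw [← _root_.sq_abs v]
      exact pow_le_pow_left₀ (abs_nonneg v) hv 2
    nlinarith
  rw [hsin, abs_mul]
  have h5 : |(-1 : ℝ) ^ (k : ℤ)| = 1 := by
    rcases Int.even_or_odd (k : ℤ) with he | ho
    · rw [he.neg_one_zpow]; simp
    · rw [Odd.neg_one_zpow ho]; simp
  rw [h5, one_mul, _root_.abs_of_nonneg (by linarith : (0:ℝ) ≤ Real.cos v)]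
  exact hcos

lemma lintegral_sin_top (T c : ℝ) (hT : 0 < T) (pt : ℝ) (hpt : 0 < pt)
    (f : ℝ × ℝ → ℂ) (a : ℝ) (hapos : 0 < a)
    (hval : ∀ r : ℝ, 0 < r → r ^ c * ‖f (r, 0)‖ = a * |Real.sin (T * Real.log r)|) :
    (∫⁻ r in Set.Ioi (0:ℝ), ENNReal.ofReal ((r ^ c * ‖f (r, 0)‖) ^ pt / r)) = ⊤ := by
  set ε : ℝ := (a / 2) ^ pt with hεdef
  have hεpos : 0 < ε := Real.rpow_pos_of_pos (by positivity) _
  set lo : ℕ → ℝ := fun k => ((k : ℝ) * Real.pi + Real.pi / 2 - 1 / 2) / T with hlodef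
  set hi : ℕ → ℝ := fun k => ((k : ℝ) * Real.pi + Real.pi / 2 + 1 / 2) / T with hhidef
  set Ik : ℕ → Set ℝ := fun k => Set.Ioc (Real.exp (lo k)) (Real.exp (hi k)) with hIkdef
  have hIkmeas : ∀ k, MeasurableSet (Ik k) := fun k => measurableSet_Ioc
  have hIkdisj : Pairwise (Function.onFun Disjoint Ik) := by
    have key : ∀ i j : ℕ, i < j → Disjoint (Ik i) (Ik j) := by
      intro i j hij
      rw [hIkdef]
      rw [Set.Ioc_disjoint_Ioc]
      refine le_trans (min_le_left _ _) (le_trans ?_ (le_max_right _ _))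
      apply Real.exp_le_exp.mpr
      rw [hhidef, hlodef]
      have hij' : (i : ℝ) + 1 ≤ (j : ℝ) := by exact_mod_cast hij
      apply (div_le_div_iff_of_pos_right hT).mpr
      nlinarith [Real.pi_gt_three]
    intro i j hij
    rcases lt_or_gt_of_ne hij with h | h
    · exact key i j h
    · exact (key j i h).symm
  have hIksub : ∀ k, Ik k ⊆ Set.Ioi (0:ℝ) := by
    intro k r hrk
    exact lt_trans (Real.exp_pos _) hrk.1
  have hsinIk : ∀ k : ℕ, ∀ r ∈ Ik k, 1 / 2 ≤ |Real.sin (T * Real.log r)| := by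
    intro k r hrk
    exact sin_log_lower T hT k r hrk.1 hrk.2
  set δ : ℝ≥0∞ := ENNReal.ofReal (ε * (1 - Real.exp (-(1/T)))) with hδdef
  have hδpos : δ ≠ 0 := by
    have h1 : Real.exp (-(1/T)) < 1 :=
      Real.exp_lt_one_iff.mpr (neg_lt_zero.mpr (by positivity))
    rw [hδdef, ne_eq, ENNReal.ofReal_eq_zero, not_le]
    nlinarith [hεpos]
  have hpiece : ∀ k : ℕ, δ ≤ ∫⁻ r in Ik k,
      ENNReal.ofReal ((r ^ c * ‖f (r, 0)‖) ^ pt / r) := by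
    intro k
    have hstep : ∀ r ∈ Ik k,
        ENNReal.ofReal (ε / Real.exp (hi k))
          ≤ ENNReal.ofReal ((r ^ c * ‖f (r, 0)‖) ^ pt / r) := by
      intro r hrk
      have hrpos : 0 < r := hIksub k hrk
      apply ENNReal.ofReal_le_ofReal
      have hle : a / 2 ≤ a * |Real.sin (T * Real.log r)| := by
        calc a / 2 = a * (1/2) := by ring
          _ ≤ a * |Real.sin (T * Real.log r)| :=
            mul_le_mul_of_nonneg_left (hsinIk k r hrk) hapos.le
      have h1 : ε ≤ (r ^ c * ‖f (r, 0)‖) ^ pt := by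
        rw [hval r hrpos, hεdef]
        exact Real.rpow_le_rpow (by positivity) hle hpt.le
      exact div_le_div₀ (le_trans hεpos.le h1) h1 hrpos hrk.2
    have hexp : Real.exp (lo k) = Real.exp (hi k) * Real.exp (-(1/T)) := by
      rw [← Real.exp_add]
      congr 1
      rw [hhidef, hlodef]
      field_simp
      ring
    calc δ ≤ ENNReal.ofReal (ε / Real.exp (hi k)) * volume (Ik k) := by
          rw [hIkdef, Real.volume_Ioc, ← ENNReal.ofReal_mul (by positivity), hδdef]
          apply ENNReal.ofReal_le_ofReal
          have heq2 : ε / Real.exp (hi k) * (Real.exp (hi k) - Real.exp (lo k))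
              = ε * (1 - Real.exp (-(1/T))) := by
            rw [hexp]
            field_simp
          rw [heq2]
      _ ≤ ∫⁻ r in Ik k, ENNReal.ofReal ((r ^ c * ‖f (r, 0)‖) ^ pt / r) := by
          rw [← setLIntegral_const (Ik k) (ENNReal.ofReal (ε / Real.exp (hi k)))]
          apply lintegral_mono_ae
          rw [ae_restrict_iff' (hIkmeas k)]
          exact ae_of_all _ hstep
  rw [eq_top_iff]
  calc (⊤ : ℝ≥0∞) = ∑' _ : ℕ, δ := (ENNReal.tsum_const_eq_top_of_ne_zero hδpos).symm
    _ ≤ ∑' k : ℕ, ∫⁻ r in Ik k, ENNReal.ofReal ((r ^ c * ‖f (r, 0)‖) ^ pt / r) :=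
        ENNReal.tsum_le_tsum hpiece
    _ = ∫⁻ r in ⋃ k, Ik k, ENNReal.ofReal ((r ^ c * ‖f (r, 0)‖) ^ pt / r) :=
        (lintegral_iUnion hIkmeas hIkdisj _).symm
    _ ≤ ∫⁻ r in Set.Ioi (0:ℝ), ENNReal.ofReal ((r ^ c * ‖f (r, 0)‖) ^ pt / r) :=
        lintegral_mono' (Measure.restrict_mono (Set.iUnion_subset hIksub) le_rfl) le_rfl

/-- uniqueness from samples in `B^p_{c,T}` with `p < ∞`. -/
theorem statement16 (p : ℝ≥0∞) (hp : 1 ≤ p) (hp' : p ≠ ⊤) (c T : ℝ) (hT : 0 < T)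
    (f : ℝ × ℝ → ℂ) (hf : MemMellinBernstein p c T f)
    (hzero : ∀ k : ℤ, f (Real.exp ((k : ℝ) * Real.pi / T), 0) = 0) :
    ∀ r θ : ℝ, 0 < r → f (r, θ) = 0 := by
  obtain ⟨hpa, hX, C, hC, hbound⟩ := hf
  set F : ℂ → ℂ := fun z => f (Real.exp z.re, z.im) with hFdef
  have hFdiff : Differentiable ℂ F := entire_of_polarAnalytic hpa
  set G : ℂ → ℂ := fun z => Complex.exp ((c : ℂ) * z) * F z with hGdef
  have hGdiff : Differentiable ℂ G :=
    (Complex.differentiable_exp.comp ((differentiable_const _).mul differentiable_id)).mul hFdiff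
  have hGbound : ∀ z : ℂ, ‖G z‖ ≤ C * Real.exp (T * |z.im|) := by
    intro z
    have h1 : ‖Complex.exp ((c : ℂ) * z)‖ = Real.exp (c * z.re) := by
      rw [Complex.norm_exp]
      congr 1
      simp [Complex.mul_re]
    have h2 := hbound (Real.exp z.re) z.im (Real.exp_pos _)
    have h3 : (Real.exp z.re) ^ c = Real.exp (c * z.re) := by
      rw [Real.rpow_def_of_pos (Real.exp_pos _), Real.log_exp, mul_comm]
    calc ‖G z‖ = Real.exp (c * z.re) * ‖F z‖ := by rw [hGdef, norm_mul, h1]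
      _ ≤ C * Real.exp (T * |z.im|) := by rw [← h3]; exact h2
  have hGzero : ∀ k : ℤ, G (((k : ℝ) * Real.pi / T : ℝ) : ℂ) = 0 := by
    intro k
    have h1 : F (((k : ℝ) * Real.pi / T : ℝ) : ℂ) = f (Real.exp ((k : ℝ) * Real.pi / T), 0) := by
      simp [hFdef]
    rw [hGdef]
    simp only [h1, hzero k, mul_zero]
  set s : ℂ → ℂ := fun z => Complex.sin ((T : ℂ) * z) with hsdef
  have hsdiff : Differentiable ℂ s :=
    Complex.differentiable_sin.comp ((differentiable_const _).mul differentiable_id)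
  have hT0 : (T : ℂ) ≠ 0 := by exact_mod_cast hT.ne'
  have hszero : ∀ z : ℂ, s z = 0 ↔ ∃ k : ℤ, z = (((k : ℝ) * Real.pi / T : ℝ) : ℂ) := by
    intro z
    rw [hsdef]
    simp only [Complex.sin_eq_zero_iff]
    constructor
    · rintro ⟨k, hk⟩
      refine ⟨k, ?_⟩
      have : z = (k : ℂ) * (Real.pi : ℂ) / (T : ℂ) := by
        field_simp at hk ⊢
        linear_combination hk
      rw [this]; push_cast; ring
    · rintro ⟨k, hk⟩
      refine ⟨k, ?_⟩
      rw [hk]; push_cast; field_simp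
  have hGs : ∀ z : ℂ, s z = 0 → G z = 0 := by
    intro z hz
    obtain ⟨k, hk⟩ := (hszero z).mp hz
    rw [hk]; exact hGzero k
  have hcosne : ∀ z : ℂ, s z = 0 → (T : ℂ) * Complex.cos ((T : ℂ) * z) ≠ 0 := by
    intro z hz
    have h1 := Complex.sin_sq_add_cos_sq ((T : ℂ) * z)
    refine mul_ne_zero hT0 fun h => ?_
    rw [hsdef] at hz
    simp only [hz, h] at h1
    norm_num at h1
  have hsderiv : ∀ z : ℂ, HasDerivAt s ((T : ℂ) * Complex.cos ((T : ℂ) * z)) z := by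
    intro z
    have h1 : HasDerivAt (fun w : ℂ => (T : ℂ) * w) (T : ℂ) z := by
      simpa using (hasDerivAt_id z).const_mul (T : ℂ)
    exact ((Complex.hasDerivAt_sin ((T : ℂ) * z)).comp z h1).congr_deriv (mul_comm _ _)
  have hiso : ∀ z₀ z : ℂ, s z₀ = 0 → z ≠ z₀ → ‖z - z₀‖ < Real.pi / T → s z ≠ 0 := by
    intro z₀ z h0 hne hlt hz
    obtain ⟨k, hk⟩ := (hszero z₀).mp h0
    obtain ⟨j, hj⟩ := (hszero z).mp hz
    have hjk : j ≠ k := by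
      rintro rfl; exact hne (hj.trans hk.symm)
    have h1 : ‖z - z₀‖ = |((j : ℝ) - k)| * (Real.pi / T) := by
      rw [hj, hk, ← Complex.ofReal_sub, Complex.norm_real, Real.norm_eq_abs]
      rw [show (j : ℝ) * Real.pi / T - (k : ℝ) * Real.pi / T = ((j : ℝ) - k) * (Real.pi / T) by ring]
      rw [abs_mul, abs_of_pos (by positivity : (0:ℝ) < Real.pi / T)]
    have h2 : (1 : ℝ) ≤ |((j : ℝ) - k)| := by
      have : ((1 : ℤ) : ℝ) ≤ |((j - k : ℤ) : ℝ)| := by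
        rw [← Int.cast_abs]
        exact_mod_cast Int.one_le_abs (sub_ne_zero.mpr hjk)
      push_cast at this ⊢
      exact this
    have h3 : Real.pi / T ≤ ‖z - z₀‖ := by
      rw [h1]
      nlinarith [Real.pi_pos, div_pos Real.pi_pos hT]
    linarith
  set H : ℂ → ℂ := fun z =>
    if s z = 0 then deriv G z / ((T : ℂ) * Complex.cos ((T : ℂ) * z)) else G z / s z with hHdef
  have hHdiff : Differentiable ℂ H := by
    intro z₀
    by_cases h0 : s z₀ = 0
    · have hdG : AnalyticAt ℂ (dslope G z₀) z₀ := by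
        obtain ⟨q, hq⟩ := hGdiff.analyticAt z₀
        exact ⟨_, hq.has_fpower_series_dslope_fslope⟩
      have hds : AnalyticAt ℂ (dslope s z₀) z₀ := by
        obtain ⟨q, hq⟩ := hsdiff.analyticAt z₀
        exact ⟨_, hq.has_fpower_series_dslope_fslope⟩
      have hds0 : dslope s z₀ z₀ = (T : ℂ) * Complex.cos ((T : ℂ) * z₀) := by
        rw [dslope_same]
        exact (hsderiv z₀).deriv
      have hne : dslope s z₀ z₀ ≠ 0 := by rw [hds0]; exact hcosne z₀ h0
      have hdiv : AnalyticAt ℂ (fun z => dslope G z₀ z / dslope s z₀ z) z₀ := hdG.div hds hne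
      apply hdiv.differentiableAt.congr_of_eventuallyEq
      have hev1 : ∀ᶠ z in 𝓝 z₀, ‖z - z₀‖ < Real.pi / T := by
        have h0' : Tendsto (fun z : ℂ => ‖z - z₀‖) (𝓝 z₀) (𝓝 0) := by
          simpa using ((continuous_id.sub (continuous_const (y := z₀))).norm.tendsto z₀)
        exact h0'.eventually_lt_const (by positivity)
      filter_upwards [hev1] with z hz
      by_cases hzz : z = z₀
      · rw [hzz]
        show H z₀ = dslope G z₀ z₀ / dslope s z₀ z₀
        simp only [hHdef, if_pos h0]
        rw [dslope_same, dslope_same, (hsderiv z₀).deriv]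
      · have hsz : s z ≠ 0 := hiso z₀ z h0 hzz hz
        show H z = dslope G z₀ z / dslope s z₀ z
        simp only [hHdef, if_neg hsz]
        rw [dslope_of_ne _ hzz, dslope_of_ne _ hzz, slope_def_field, slope_def_field,
          hGs z₀ h0, h0]
        have hzsub : z - z₀ ≠ 0 := sub_ne_zero.mpr hzz
        field_simp
        ring
    · have hev : ∀ᶠ z in 𝓝 z₀, s z ≠ 0 :=
        (hsdiff.continuous.continuousAt).eventually_ne h0
      have hd : DifferentiableAt ℂ (fun z => G z / s z) z₀ :=
        (hGdiff z₀).div (hsdiff z₀) h0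
      apply hd.congr_of_eventuallyEq
      filter_upwards [hev] with z hz
      show H z = G z / s z
      simp only [hHdef, if_neg hz]
  -- bounds
  have hM2 : ∀ z : ℂ, (∀ k : ℤ, Real.pi / (2 * T) ≤ ‖z - (((k : ℝ) * Real.pi / T : ℝ) : ℂ)‖) →
      ‖H z‖ ≤ C * Real.exp (T * |z.im|) := by
    intro z hz
    have hsne : s z ≠ 0 := by
      intro h
      obtain ⟨k, hk⟩ := (hszero z).mp h
      have h1 := hz k
      rw [hk, sub_self, norm_zero] at h1
      have : (0:ℝ) < Real.pi / (2 * T) := by positivity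
      linarith
    have hsin1 : 1 ≤ ‖s z‖ := by
      rw [hsdef]
      apply one_le_norm_sin
      intro k
      have h1 := hz k
      have h2 : (T : ℂ) * z - (k : ℂ) * (Real.pi : ℂ)
          = (T : ℂ) * (z - (((k : ℝ) * Real.pi / T : ℝ) : ℂ)) := by
        push_cast
        field_simp
      rw [h2, norm_mul, Complex.norm_real, Real.norm_eq_abs, abs_of_pos hT]
      calc Real.pi / 2 = T * (Real.pi / (2 * T)) := by field_simp
        _ ≤ T * ‖z - (((k : ℝ) * Real.pi / T : ℝ) : ℂ)‖ :=
            mul_le_mul_of_nonneg_left h1 hT.le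
    have hH : H z = G z / s z := by simp only [hHdef, if_neg hsne]
    rw [hH, norm_div]
    calc ‖G z‖ / ‖s z‖ ≤ ‖G z‖ := div_le_self (norm_nonneg _) hsin1
      _ ≤ C * Real.exp (T * |z.im|) := hGbound z
  have hM1 : ∀ z : ℂ, Real.pi / (2 * T) ≤ |z.im| →
      ‖H z‖ ≤ 2 * C / (1 - Real.exp (-Real.pi)) := by
    intro z hz
    have him : (0:ℝ) < |z.im| := lt_of_lt_of_le (by positivity) hz
    have hsne : s z ≠ 0 := by
      intro h
      obtain ⟨k, hk⟩ := (hszero z).mp h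
      rw [hk] at him
      simp [Complex.ofReal_im] at him
    have hexpos : (0:ℝ) < Real.exp (T * |z.im|) := Real.exp_pos _
    have hfac : (0:ℝ) < 1 - Real.exp (-Real.pi) := by
      have : Real.exp (-Real.pi) < 1 := Real.exp_lt_one_iff.mpr (by linarith [Real.pi_pos])
      linarith
    have hlow : Real.exp (T * |z.im|) * ((1 - Real.exp (-Real.pi)) / 2) ≤ ‖s z‖ := by
      have h1 : Real.sinh (|((T:ℂ)*z).im|) ≤ ‖s z‖ := sinh_le_norm_sin _
      have h2 : |((T:ℂ)*z).im| = T * |z.im| := by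
        simp [Complex.mul_im, Complex.ofReal_re, Complex.ofReal_im, abs_mul,
          abs_of_pos hT]
      rw [h2] at h1
      refine le_trans ?_ h1
      rw [Real.sinh_eq]
      have h3 : Real.exp (-(T * |z.im|)) ≤ Real.exp (-Real.pi) * Real.exp (T * |z.im|) := by
        rw [← Real.exp_add]
        apply Real.exp_le_exp.mpr
        have h4 : Real.pi ≤ 2 * (T * |z.im|) := by
          have h6 : T * (Real.pi / (2 * T)) ≤ T * |z.im| :=
            mul_le_mul_of_nonneg_left hz hT.le
          have h5 : T * (Real.pi / (2 * T)) = Real.pi / 2 := by field_simp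
          linarith
        linarith
      nlinarith [h3]
    have hspos : (0:ℝ) < ‖s z‖ := norm_pos_iff.mpr hsne
    have hH : H z = G z / s z := by simp only [hHdef, if_neg hsne]
    rw [hH, norm_div]
    rw [div_le_div_iff₀ hspos hfac]
    calc ‖G z‖ * (1 - Real.exp (-Real.pi))
        ≤ (C * Real.exp (T * |z.im|)) * (1 - Real.exp (-Real.pi)) :=
          mul_le_mul_of_nonneg_right (hGbound z) hfac.le
      _ = 2 * C * (Real.exp (T * |z.im|) * ((1 - Real.exp (-Real.pi)) / 2)) := by ring
      _ ≤ 2 * C * ‖s z‖ := mul_le_mul_of_nonneg_left hlow (by positivity)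
  set M : ℝ := max (2 * C / (1 - Real.exp (-Real.pi))) (C * Real.exp (Real.pi / 2)) with hMdef
  have hρ : (0:ℝ) < Real.pi / (2 * T) := by positivity
  have hHM : ∀ z : ℂ, ‖H z‖ ≤ M := by
    intro z
    by_cases hcase : ∀ k : ℤ, Real.pi / (2 * T) ≤ ‖z - (((k : ℝ) * Real.pi / T : ℝ) : ℂ)‖
    · by_cases him : Real.pi / (2 * T) ≤ |z.im|
      · exact (hM1 z him).trans (le_max_left _ _)
      · push_neg at him
        refine le_trans (hM2 z hcase) (le_trans ?_ (le_max_right _ _))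
        have h1 : T * |z.im| ≤ Real.pi / 2 := by
          have h6 : T * |z.im| ≤ T * (Real.pi / (2 * T)) :=
            mul_le_mul_of_nonneg_left him.le hT.le
          have h5 : T * (Real.pi / (2 * T)) = Real.pi / 2 := by field_simp
          linarith
        exact mul_le_mul_of_nonneg_left (Real.exp_le_exp.mpr h1) hC.le
    · push_neg at hcase
      obtain ⟨k, hk⟩ := hcase
      set z₀ : ℂ := (((k : ℝ) * Real.pi / T : ℝ) : ℂ) with hz₀
      have hfr : ∀ w ∈ frontier (Metric.ball z₀ (Real.pi / (2 * T))),
          ‖H w‖ ≤ C * Real.exp (Real.pi / 2) := by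
        intro w hw
        rw [frontier_ball _ hρ.ne'] at hw
        have hwd : ‖w - z₀‖ = Real.pi / (2 * T) := by
          simpa [Metric.mem_sphere, dist_eq_norm] using hw
        have him : |w.im| ≤ Real.pi / (2 * T) := by
          have h1 : |(w - z₀).im| ≤ ‖w - z₀‖ := by
            exact Complex.abs_im_le_norm _
          rw [hwd] at h1
          simpa [hz₀, Complex.sub_im, Complex.ofReal_im] using h1
        have hfar : ∀ j : ℤ, Real.pi / (2 * T) ≤ ‖w - (((j : ℝ) * Real.pi / T : ℝ) : ℂ)‖ := by
          intro j
          by_cases hjk : j = k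
          · rw [hjk, ← hz₀, hwd]
          · set zj : ℂ := (((j : ℝ) * Real.pi / T : ℝ) : ℂ) with hzj
            have hd : Real.pi / T ≤ ‖z₀ - zj‖ := by
              rw [hz₀, hzj, ← Complex.ofReal_sub, Complex.norm_real, Real.norm_eq_abs]
              rw [show (k : ℝ) * Real.pi / T - (j : ℝ) * Real.pi / T
                  = ((k : ℝ) - j) * (Real.pi / T) by ring]
              rw [abs_mul, abs_of_pos (by positivity : (0:ℝ) < Real.pi / T)]
              have h2 : (1 : ℝ) ≤ |((k : ℝ) - j)| := by
                have : ((1 : ℤ) : ℝ) ≤ |((k - j : ℤ) : ℝ)| := by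
                  rw [← Int.cast_abs]
                  exact_mod_cast Int.one_le_abs (sub_ne_zero.mpr (Ne.symm hjk))
                push_cast at this ⊢
                exact this
              nlinarith [div_pos Real.pi_pos hT]
            have htri : ‖z₀ - zj‖ ≤ ‖z₀ - w‖ + ‖w - zj‖ := by
              simpa using norm_sub_le_norm_sub_add_norm_sub z₀ w zj
            have h3 : ‖z₀ - w‖ = Real.pi / (2 * T) := by rw [norm_sub_rev]; exact hwd
            have h4 : Real.pi / T - Real.pi / (2 * T) = Real.pi / (2 * T) := by
              field_simp; ring
            linarith
        refine le_trans (hM2 w hfar) ?_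
        have h5 : T * |w.im| ≤ Real.pi / 2 := by
          have h7 : T * |w.im| ≤ T * (Real.pi / (2 * T)) :=
            mul_le_mul_of_nonneg_left him hT.le
          have h6 : T * (Real.pi / (2 * T)) = Real.pi / 2 := by field_simp
          linarith
        exact mul_le_mul_of_nonneg_left (Real.exp_le_exp.mpr h5) hC.le
      have hball : z ∈ closure (Metric.ball z₀ (Real.pi / (2 * T))) :=
        subset_closure (Metric.mem_ball.mpr (by rwa [dist_eq_norm]))
      have := Complex.norm_le_of_forall_mem_frontier_norm_le Metric.isBounded_ball
        (hHdiff.diffContOnCl) hfr hball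
      exact this.trans (le_max_right _ _)
  have hconst : ∀ z : ℂ, H z = H 0 := by
    intro z
    apply hHdiff.apply_eq_apply_of_bounded
    rw [isBounded_iff_forall_norm_le]
    exact ⟨M, by rintro x ⟨z, rfl⟩; exact hHM z⟩
  have hGa : ∀ z : ℂ, G z = H 0 * s z := by
    intro z
    by_cases hs0 : s z = 0
    · rw [hGs z hs0, hs0, mul_zero]
    · have h1 : H z = G z / s z := by simp only [hHdef, if_neg hs0]
      have h2 : G z / s z = H 0 := h1.symm.trans (hconst z)
      exact (div_eq_iff hs0).mp h2
  -- value on the real line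
  have hval : ∀ r : ℝ, 0 < r → r ^ c * ‖f (r, 0)‖ = ‖H 0‖ * |Real.sin (T * Real.log r)| := by
    intro r hr
    have hFv : F ((Real.log r : ℝ) : ℂ) = f (r, 0) := by
      simp [hFdef, Real.exp_log hr]
    have h1 : ‖G ((Real.log r : ℝ) : ℂ)‖ = Real.exp (c * Real.log r) * ‖f (r, 0)‖ := by
      rw [hGdef]
      simp only [norm_mul, hFv]
      congr 1
      rw [Complex.norm_exp]
      congr 1
      simp [Complex.mul_re]
    have h2 : r ^ c = Real.exp (c * Real.log r) := by
      rw [Real.rpow_def_of_pos hr, mul_comm]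
    have h3 : ‖H 0 * s ((Real.log r : ℝ) : ℂ)‖ = ‖H 0‖ * |Real.sin (T * Real.log r)| := by
      rw [norm_mul]
      congr 1
      simp only [hsdef]
      have h4 : (T : ℂ) * ((Real.log r : ℝ) : ℂ) = ((T * Real.log r : ℝ) : ℂ) := by
        push_cast; ring
      rw [h4, ← Complex.ofReal_sin, Complex.norm_real, Real.norm_eq_abs]
    rw [h2, ← h1, hGa ((Real.log r : ℝ) : ℂ), h3]
  have ha : H 0 = 0 := by
    by_contra han
    have hapos : (0:ℝ) < ‖H 0‖ := norm_pos_iff.mpr han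
    have hpt : 0 < p.toReal := ENNReal.toReal_pos (zero_lt_one.trans_le hp).ne' hp'
    rw [XNorm, if_neg hp'] at hX
    rw [lintegral_sin_top T c hT p.toReal hpt f ‖H 0‖ hapos hval] at hX
    rw [ENNReal.top_rpow_of_pos (by positivity)] at hX
    exact (lt_irrefl _ hX)
  -- conclusion
  intro r θ hr
  have h1 : G ((Real.log r : ℝ) + (θ : ℝ) * Complex.I) = 0 := by
    rw [hGa]; rw [ha]; ring
  have h2 : F ((Real.log r : ℝ) + (θ : ℝ) * Complex.I) = 0 := by
    rw [hGdef] at h1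
    simpa [Complex.exp_ne_zero] using h1
  have h3 : F ((Real.log r : ℝ) + (θ : ℝ) * Complex.I) = f (r, θ) := by
    rw [hFdef]
    simp [Real.exp_log hr]
  rw [← h3, h2]

end
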